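/- arXiv:2008.07075 — 2 statements merged into one kernel-verified Lean document; each statement's English description precedes it below -/
import Mathlib

section
/- Let 0 < ρ < R and let M : [ρ, R] → ℝ be twice continuously differentiable with M''(r) + (1/r)M'(r) = λ·M(r) on (ρ, R) for some λ > 0, boundary conditions M(ρ) = 1 and M'(R) = −M(R). Then M(r) ≥ 0 for all r ∈ [ρ, R]. -/
/-- If `g` has negative derivative at `x` and `g x = 0`, then `g < 0` just to the right. -/
lemma neg_right_of_hasDerivAt_neg {g : ℝ → ℝ} {x c : ℝ} (hg : HasDerivAt g c x)
    (hc : c < 0) (hx : g x = 0) : ∀ᶠ r in nhdsWithin x (Set.Ioi x), g r < 0 := by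
  have h := hasDerivAt_iff_tendsto_slope.mp hg
  have h2 : ∀ᶠ r in nhdsWithin x {x}ᶜ, slope g x r < 0 :=
    h.eventually (Filter.Tendsto.eventually_lt_const hc Filter.tendsto_id)
  have hle : nhdsWithin x (Set.Ioi x) ≤ nhdsWithin x {x}ᶜ := by
    apply nhdsWithin_mono
    intro r hr
    simp only [Set.mem_compl_iff, Set.mem_singleton_iff]
    exact ne_of_gt hr
  filter_upwards [hle h2, self_mem_nhdsWithin] with r hr (hrx : x < r)
  rw [slope_def_field, hx, sub_zero] at hr
  have := mul_neg_of_neg_of_pos hr (sub_pos.mpr hrx)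
  rwa [div_mul_cancel₀ _ (sub_ne_zero.mpr (ne_of_gt hrx))] at this

/-- If `M` has positive derivative at `x`, then `M < M x` just to the left. -/
lemma lt_left_of_hasDerivAt_pos {M : ℝ → ℝ} {x c : ℝ} (hg : HasDerivAt M c x)
    (hc : 0 < c) : ∀ᶠ r in nhdsWithin x (Set.Iio x), M r < M x := by
  have h := hasDerivAt_iff_tendsto_slope.mp hg
  have h2 : ∀ᶠ r in nhdsWithin x {x}ᶜ, 0 < slope M x r :=
    h.eventually (Filter.Tendsto.eventually_const_lt hc Filter.tendsto_id)
  have hle : nhdsWithin x (Set.Iio x) ≤ nhdsWithin x {x}ᶜ := by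
    apply nhdsWithin_mono
    intro r hr
    simp only [Set.mem_compl_iff, Set.mem_singleton_iff]
    exact ne_of_lt hr
  filter_upwards [hle h2, self_mem_nhdsWithin] with r hr (hrx : r < x)
  rw [slope_def_field] at hr
  have hne : r - x ≠ 0 := sub_ne_zero.mpr (ne_of_lt hrx)
  have heq : (M r - M x) / (r - x) = (M x - M r) / (x - r) := by
    rw [div_eq_div_iff hne (sub_ne_zero.mpr (ne_of_gt hrx))]; ring
  rw [heq] at hr
  have := mul_pos hr (sub_pos.mpr hrx)
  rw [div_mul_cancel₀ _ (sub_ne_zero.mpr (ne_of_gt hrx))] at this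
  linarith

/-- positivity of the radially symmetric steady state macrophage density. -/
theorem stmt1 (ρ R lam : ℝ) (hρ : 0 < ρ) (hρR : ρ < R) (hlam : 0 < lam)
    (M : ℝ → ℝ) (hM : ContDiffOn ℝ 2 M (Set.Icc ρ R))
    (hode : ∀ r ∈ Set.Ioo ρ R,
      deriv (deriv M) r + (1 / r) * deriv M r = lam * M r)
    (hbρ : M ρ = 1) (hbR : deriv M R = - M R) :
    ∀ r ∈ Set.Icc ρ R, 0 ≤ M r := by
  have hcont : ContinuousOn M (Set.Icc ρ R) := hM.continuousOn
  obtain ⟨r0, hr0, hmin⟩ := isCompact_Icc.exists_isMinOn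
    (Set.nonempty_Icc.mpr hρR.le) hcont
  intro r hr
  by_contra hneg
  push_neg at hneg
  have hMr0 : M r0 < 0 := lt_of_le_of_lt (hmin hr) hneg
  -- r0 ≠ ρ
  have hne_ρ : r0 ≠ ρ := by
    intro h; rw [h, hbρ] at hMr0; linarith
  rcases eq_or_lt_of_le hr0.2 with hR | hR
  · -- r0 = R : Robin boundary condition
    subst hR
    by_cases hdiff : DifferentiableAt ℝ M r0
    · have hD : HasDerivAt M (-M r0) r0 := by
        have := hdiff.hasDerivAt
        rwa [hbR] at this
      have hev := lt_left_of_hasDerivAt_pos hD (by linarith)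
      have hev2 : Set.Ioo ρ r0 ∈ nhdsWithin r0 (Set.Iio r0) :=
        mem_nhdsWithin.mpr ⟨Set.Ioi ρ, isOpen_Ioi, hρR, fun x hx => ⟨hx.1, hx.2⟩⟩
      obtain ⟨r2, hr2a, hr2b⟩ := (hev.and (Filter.eventually_mem_set.mpr hev2)).exists
      have : M r0 ≤ M r2 := hmin ⟨hr2b.1.le, hr2b.2.le⟩
      linarith
    · rw [deriv_zero_of_not_differentiableAt hdiff] at hbR
      linarith [hbR ▸ hMr0]
  · -- interior minimum
    have hr0mem : r0 ∈ Set.Ioo ρ R := ⟨lt_of_le_of_ne hr0.1 (Ne.symm hne_ρ), hR⟩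
    have hloc : IsLocalMin M r0 :=
      hmin.isLocalMin (Icc_mem_nhds hr0mem.1 hr0mem.2)
    have hd1 : deriv M r0 = 0 := hloc.deriv_eq_zero
    have hode0 := hode r0 hr0mem
    rw [hd1, mul_zero, add_zero] at hode0
    have hc : deriv (deriv M) r0 < 0 := by
      rw [hode0]; exact mul_neg_of_pos_of_neg hlam hMr0
    have hdiff : DifferentiableAt ℝ (deriv M) r0 := by
      by_contra h
      rw [deriv_zero_of_not_differentiableAt h] at hc; linarith
    have hD : HasDerivAt (deriv M) (deriv (deriv M) r0) r0 := hdiff.hasDerivAt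
    have hev := neg_right_of_hasDerivAt_neg hD hc hd1
    have hev2 : Set.Ioo r0 R ∈ nhdsWithin r0 (Set.Ioi r0) := by
      apply mem_nhdsWithin.mpr
      exact ⟨Set.Iio R, isOpen_Iio, hr0mem.2, fun x hx => ⟨hx.2, hx.1⟩⟩
    obtain ⟨u, hu, hsub⟩ := mem_nhdsGT_iff_exists_Ioo_subset.mp
      (Filter.inter_mem hev hev2)
    set r1 := (r0 + min u R) / 2 with hr1def
    have hminuR : r0 < min u R := lt_min hu hr0mem.2
    have hr1a : r0 < r1 := by simp only [hr1def]; linarith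
    have hr1b : r1 < min u R := by simp only [hr1def]; linarith
    have hr1u : r1 < u := lt_of_lt_of_le hr1b (min_le_left _ _)
    have hr1R : r1 < R := lt_of_lt_of_le hr1b (min_le_right _ _)
    have hanti : StrictAntiOn M (Set.Icc r0 r1) := by
      apply strictAntiOn_of_deriv_neg (convex_Icc _ _)
      · exact hcont.mono (Set.Icc_subset_Icc hr0.1 (by linarith))
      · intro x hx
        rw [interior_Icc] at hx
        have : x ∈ Set.Ioo r0 u := ⟨hx.1, lt_trans hx.2 hr1u⟩
        exact (hsub this).1
    have : M r1 < M r0 := hanti (Set.left_mem_Icc.mpr hr1a.le)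
      (Set.right_mem_Icc.mpr hr1a.le) hr1a
    have : M r0 ≤ M r1 := hmin ⟨le_trans hr0.1 hr1a.le, hr1R.le⟩
    linarith
end

section
/- Let 0 < ρ < R, λ > 0, and let Q : [ρ, R] → ℝ be a C² solution of Q'' + Q'/r − (λ + n²/r²)Q = 0 on (ρ, R) with Q(ρ) = −M'(ρ) > 0 and Q'(R) = −Q(R). Then Q(r) ≥ 0 on [ρ, R]. -/
open Set Filter Topology

/-- If `f` has negative derivative at `x`, then just to the left of `x`, `f` is above `f x`. -/
lemma left_gt_of_neg_deriv {f : ℝ → ℝ} {c x : ℝ} (h : HasDerivAt f c x) (hc : c < 0) :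
    ∀ᶠ r in 𝓝[<] x, f x < f r := by
  have hs := hasDerivAt_iff_tendsto_slope.mp h
  have h1 : ∀ᶠ r in 𝓝[≠] x, slope f x r < 0 := hs.eventually (eventually_lt_nhds hc)
  have h2 : ∀ᶠ r in 𝓝[<] x, slope f x r < 0 :=
    h1.filter_mono (nhdsWithin_mono x fun r hr => ne_of_lt hr)
  filter_upwards [h2, self_mem_nhdsWithin] with r hr hrx
  have hrx' : r < x := hrx
  rw [slope_def_field] at hr
  rcases div_neg_iff.mp hr with ⟨hp, hq⟩ | ⟨hp, hq⟩
  · linarith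
  · linarith

lemma left_lt_of_pos_deriv {f : ℝ → ℝ} {c x : ℝ} (h : HasDerivAt f c x) (hc : 0 < c) :
    ∀ᶠ r in 𝓝[<] x, f r < f x := by
  have := left_gt_of_neg_deriv (f := fun y => -f y) (h.neg) (by linarith)
  filter_upwards [this] with r hr
  simpa using hr

/-- positivity of the radial part `Q_n` of the first-order correction. -/
theorem stmt9 (ρ R lam : ℝ) (n : ℕ) (hρ : 0 < ρ) (hρR : ρ < R) (hlam : 0 < lam)
    (M Q : ℝ → ℝ) (hQ : ContDiffOn ℝ 2 Q (Set.Icc ρ R))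
    (hode : ∀ r ∈ Set.Ioo ρ R,
      deriv (deriv Q) r + (1 / r) * deriv Q r - (lam + (n : ℝ) ^ 2 / r ^ 2) * Q r = 0)
    (hQρ : Q ρ = - deriv M ρ) (hMρ : deriv M ρ < 0)
    (hbR : deriv Q R = - Q R) :
    ∀ r ∈ Set.Icc ρ R, 0 ≤ Q r := by
  by_contra hcon
  push_neg at hcon
  obtain ⟨r₁, hr₁, hneg⟩ := hcon
  have hcont : ContinuousOn Q (Icc ρ R) := hQ.continuousOn
  obtain ⟨r₀, hr₀mem, hmin⟩ :=
    isCompact_Icc.exists_isMinOn (nonempty_Icc.mpr hρR.le) hcont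
  have hminle : ∀ x ∈ Icc ρ R, Q r₀ ≤ Q x := fun x hx => hmin hx
  have hQr₀ : Q r₀ < 0 := lt_of_le_of_lt (hminle r₁ hr₁) hneg
  have hQρpos : 0 < Q ρ := by rw [hQρ]; linarith
  have hne : r₀ ≠ ρ := by
    intro h; rw [h] at hQr₀; linarith
  rcases eq_or_lt_of_le hr₀mem.2 with hR | hlt
  · -- minimum at R
    have hQR : Q R < 0 := hR ▸ hQr₀
    by_cases hdiff : DifferentiableAt ℝ Q R
    · have hD : HasDerivAt Q (deriv Q R) R := hdiff.hasDerivAt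
      have hcpos : 0 < deriv Q R := by rw [hbR]; linarith
      have hev := left_lt_of_pos_deriv hD hcpos
      have hev2 : ∀ᶠ r in 𝓝[<] R, ρ < r :=
        eventually_nhdsWithin_of_eventually_nhds (eventually_gt_nhds hρR)
      have hev3 : ∀ᶠ r in 𝓝[<] R, r < R := self_mem_nhdsWithin
      obtain ⟨r, ⟨hrQ, hρr⟩, hrI⟩ := ((hev.and hev2).and hev3).exists
      have hrmem : r ∈ Icc ρ R := ⟨le_of_lt hρr, le_of_lt hrI⟩
      have hrQ' : Q r < Q R := hrQ
      have := hminle r hrmem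
      rw [hR] at this
      linarith
    · rw [deriv_zero_of_not_differentiableAt hdiff] at hbR
      linarith
  · -- minimum in the interior
    have hρlt : ρ < r₀ := lt_of_le_of_ne hr₀mem.1 (Ne.symm hne)
    have hr₀Ioo : r₀ ∈ Ioo ρ R := ⟨hρlt, hlt⟩
    have hloc : IsLocalMin Q r₀ :=
      hmin.isLocalMin (Icc_mem_nhds hρlt hlt)
    have hder0 : deriv Q r₀ = 0 := hloc.deriv_eq_zero
    have hr₀pos : 0 < r₀ := lt_trans hρ hρlt
    have hcpos : 0 < lam + (n : ℝ) ^ 2 / r₀ ^ 2 := by positivity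
    have hode0 := hode r₀ hr₀Ioo
    rw [hder0] at hode0
    have hdd : deriv (deriv Q) r₀ = (lam + (n : ℝ) ^ 2 / r₀ ^ 2) * Q r₀ := by linarith
    have hddneg : deriv (deriv Q) r₀ < 0 := by
      rw [hdd]; exact mul_neg_of_pos_of_neg hcpos hQr₀
    by_cases hdiffg : DifferentiableAt ℝ (deriv Q) r₀
    · have hD : HasDerivAt (deriv Q) (deriv (deriv Q) r₀) r₀ := hdiffg.hasDerivAt
      have hev : ∀ᶠ r in 𝓝[<] r₀, 0 < deriv Q r := by
        filter_upwards [left_gt_of_neg_deriv hD hddneg] with r hr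
        rw [hder0] at hr; exact hr
      have hev2 : ∀ᶠ r in 𝓝[<] r₀, ρ < r :=
        eventually_nhdsWithin_of_eventually_nhds (eventually_gt_nhds hρlt)
      obtain ⟨a, ha, hIoo⟩ :=
        (mem_nhdsLT_iff_exists_Ioo_subset).mp (hev.and hev2)
      · have ham : (a + r₀) / 2 ∈ Ioo a r₀ := by
          constructor <;> [linarith [mem_Iio.mp ha]; linarith [mem_Iio.mp ha]]
        set m := (a + r₀) / 2 with hm
        obtain ⟨hmd, hmρ⟩ := hIoo ham
        have hmono : StrictMonoOn Q (Icc m r₀) := by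
          apply strictMonoOn_of_deriv_pos (convex_Icc m r₀)
          · exact hcont.mono (fun x hx => ⟨le_trans hmρ.le hx.1, le_trans hx.2 hlt.le⟩)
          · intro x hx
            rw [interior_Icc] at hx
            exact (hIoo ⟨lt_of_lt_of_le ham.1 hx.1.le, hx.2⟩).1
        have hmm : m ∈ Icc m r₀ := ⟨le_refl m, ham.2.le⟩
        have hr₀m : r₀ ∈ Icc m r₀ := ⟨ham.2.le, le_refl r₀⟩
        have hQlt : Q m < Q r₀ := hmono hmm hr₀m ham.2
        have : Q r₀ ≤ Q m := hminle m ⟨hmρ.le, le_trans ham.2.le hlt.le⟩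
        linarith
    · rw [deriv_zero_of_not_differentiableAt hdiffg] at hdd
      have : Q r₀ = 0 := by
        rcases mul_eq_zero.mp hdd.symm with h | h
        · linarith
        · exact h
      linarith
end
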